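/- For every integer n ≥ 9 one has (1 + (ln n)/n² − (ln(ln n))/(8n²))^{(n²−n)/2} < √n / (ln n)^{1/16}. -/

import Mathlib

/-- **Lemma 3.18, inequality (3.18).** For every integer `n ≥ 9`,
`(1 + (ln n)/n² − ln(ln n)/(8n²))^{(n²−n)/2} < √n / (ln n)^{1/16}`. -/
theorem ssp3_upper_bound_aux (n : ℕ) (hn : 9 ≤ n) :
    (1 + Real.log n / (n : ℝ) ^ 2 - Real.log (Real.log n) / (8 * (n : ℝ) ^ 2)) ^
        ((n ^ 2 - n) / 2) <
      Real.sqrt n / Real.log n ^ ((1 : ℝ) / 16) := by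
  set N : ℝ := (n : ℝ) with hNdef
  have hN : (9:ℝ) ≤ N := by rw [hNdef]; exact_mod_cast hn
  have hN0 : (0:ℝ) < N := by linarith
  have hN2 : (0:ℝ) < N ^ 2 := by positivity
  set L : ℝ := Real.log N with hLdef
  set M : ℝ := Real.log L with hMdef
  have hL0 : (0:ℝ) < L := Real.log_pos (by linarith)
  have hML : M < L := by
    have := Real.log_le_sub_one_of_pos hL0
    rw [hMdef]; linarith
  -- the natural exponent
  have heven : Even (n ^ 2 - n) := by
    have h := Nat.even_mul_succ_self (n - 1)
    have hn1 : n - 1 + 1 = n := by omega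
    rw [hn1, Nat.sub_one_mul, ← pow_two] at h
    exact h
  have hmR : (((n ^ 2 - n) / 2 : ℕ) : ℝ) = (N ^ 2 - N) / 2 := by
    obtain ⟨k, hk⟩ := heven
    have hle : n ≤ n ^ 2 := Nat.le_self_pow two_ne_zero n
    have : (n ^ 2 - n) / 2 = k := by omega
    rw [this]
    have : (n:ℝ) ^ 2 - (n:ℝ) = 2 * k := by
      have h2 := congrArg (Nat.cast : ℕ → ℝ) hk
      push_cast [hle] at h2
      linarith
    rw [hNdef]; linarith
  set x : ℝ := L / N ^ 2 - M / (8 * N ^ 2) with hxdef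
  have hx0 : 0 < x := by
    rw [hxdef]
    have : M / (8 * N ^ 2) < L / N ^ 2 := by
      rw [div_lt_div_iff₀ (by positivity) hN2]
      nlinarith
    linarith
  set m : ℕ := (n ^ 2 - n) / 2 with hmdef
  have h1 : (1 + x) ^ m ≤ Real.exp ((m : ℝ) * x) := by
    calc (1 + x) ^ m ≤ (Real.exp x) ^ m := by
          apply pow_le_pow_left₀ (by linarith)
          have := Real.add_one_le_exp x
          linarith
      _ = Real.exp ((m : ℝ) * x) := (Real.exp_nat_mul x m).symm
  have hkey : (m : ℝ) * x < L / 2 - M / 16 := by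
    rw [hmR, hxdef]
    have heq : (N ^ 2 - N) / 2 * (L / N ^ 2 - M / (8 * N ^ 2)) =
        (L / 2 - M / 16) - (8 * L - M) / (16 * N) := by
      field_simp
      ring
    rw [heq]
    have : 0 < (8 * L - M) / (16 * N) := by
      apply div_pos (by nlinarith) (by linarith)
    linarith
  have h2 : Real.exp ((m : ℝ) * x) < Real.exp (L / 2 - M / 16) :=
    Real.exp_lt_exp.mpr hkey
  have hrhs : Real.sqrt N / L ^ ((1:ℝ)/16) = Real.exp (L / 2 - M / 16) := by
    rw [Real.sqrt_eq_rpow, Real.rpow_def_of_pos hN0, Real.rpow_def_of_pos hL0,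
      ← Real.exp_sub]
    ring_nf
    rfl
  have goal_eq : (1 + Real.log ↑n / (n : ℝ) ^ 2 -
      Real.log (Real.log ↑n) / (8 * (n : ℝ) ^ 2)) = 1 + x := by
    rw [hxdef]; ring
  rw [goal_eq]
  calc (1 + x) ^ m ≤ Real.exp ((m:ℝ) * x) := h1
    _ < Real.exp (L / 2 - M / 16) := h2
    _ = Real.sqrt N / L ^ ((1:ℝ)/16) := hrhs.symm
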